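/- For every integer n, every natural number k, and every positive integer N, the number of indices j with 0 ≤ j < k such that T^j(N) is odd equals the number of indices j with 0 ≤ j < k such that F_n^j(N + A_n) is even; that is, β_k(N) = α_{n,k}(N + A_n). -/

import Mathlib

def T (N : ℤ) : ℤ := if Even N then N / 2 else (3 * N + 1) / 2

def F (n : ℤ) (P : ℤ) : ℤ := if Even P then (3 * P - 2 * n) / 2 else (P + 2 * n + 1) / 2

def A (n : ℤ) : ℤ := 2 * n + 1

lemma F_conj (n x : ℤ) : F n (x + A n) = T x + A n := by
  simp only [F, T, A]
  rcases Int.even_or_odd x with ⟨m, rfl⟩ | ⟨m, rfl⟩ <;>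
    split_ifs <;> simp_all [Int.even_iff, Int.odd_iff] <;> omega

lemma F_iter (n x : ℤ) (j : ℕ) : (F n)^[j] (x + A n) = T^[j] x + A n := by
  induction j generalizing x with
  | zero => simp
  | succ j ih =>
    rw [Function.iterate_succ_apply, Function.iterate_succ_apply, F_conj, ih]

theorem stmt_10 (n : ℤ) (k : ℕ) (N : ℤ) (hN : 0 < N) :
    ((Finset.range k).filter (fun j => Odd (T^[j] N))).card =
      ((Finset.range k).filter (fun j => Even ((F n)^[j] (N + A n)))).card := by
  congr 1
  apply Finset.filter_congr
  intro j _
  rw [F_iter]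
  rw [A, Int.even_add]
  simp only [Int.even_iff, Int.odd_iff]
  omega
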